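/- Let K be a finite field with q elements and let Ω be an algebraic closure of K. Let α₁, α₂ ∈ Ω be such that [K(α₁):K] = d₁ and [K(α₂):K] = d₂ with gcd(d₁, d₂) = 1. Then α₁ + α₂ generates the compositum of K(α₁) and K(α₂) over K; that is, [K(α₁ + α₂):K] = d₁·d₂, so K(α₁ + α₂) is the subfield of Ω with q^{d₁ d₂} elements. -/

import Mathlib

open IntermediateField Polynomial

section Aux

variable {K Ω : Type*} [Field K] [Fintype K] [Field Ω] [Algebra K Ω]

private lemma aux_finrank_dvd {A B : IntermediateField K Ω} (h : A ≤ B) :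
    Module.finrank K A ∣ Module.finrank K B :=
  ⟨A.relfinrank B, (IntermediateField.finrank_bot_mul_relfinrank h).symm⟩

private lemma aux_add_pow (x y : Ω) (k : ℕ) :
    (x + y) ^ (Fintype.card K) ^ k
      = x ^ (Fintype.card K) ^ k + y ^ (Fintype.card K) ^ k := by
  haveI : CharP Ω (ringChar K) :=
    charP_of_injective_algebraMap (algebraMap K Ω).injective (ringChar K)
  haveI : Fact (ringChar K).Prime := ⟨CharP.char_is_prime K (ringChar K)⟩
  obtain ⟨n, -, hn⟩ := FiniteField.card K (ringChar K)
  have hnk : (ringChar K ^ (n : ℕ)) ^ k = ringChar K ^ ((n : ℕ) * k) := (pow_mul _ _ _).symm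
  rw [hn, hnk, add_pow_char_pow]

variable [IsAlgClosure K Ω]

private lemma aux_isIntegral (β : Ω) : IsIntegral K β := by
  haveI : Algebra.IsAlgebraic K Ω := IsAlgClosure.isAlgebraic
  exact (Algebra.IsAlgebraic.isAlgebraic β).isIntegral

private lemma aux_pow_fix (β : Ω) :
    β ^ (Fintype.card K) ^ (Module.finrank K (adjoin K ({β} : Set Ω))) = β := by
  have hβ : IsIntegral K β := aux_isIntegral β
  haveI : FiniteDimensional K (adjoin K ({β} : Set Ω)) := adjoin.finiteDimensional hβ
  haveI : Finite (adjoin K ({β} : Set Ω)) := Module.finite_of_finite K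
  letI : Fintype (adjoin K ({β} : Set Ω)) := Fintype.ofFinite _
  have hcard : Fintype.card (adjoin K ({β} : Set Ω))
      = Fintype.card K ^ Module.finrank K (adjoin K ({β} : Set Ω)) := Module.card_eq_pow_finrank
  have hx := FiniteField.pow_card (⟨β, mem_adjoin_simple_self K β⟩ : adjoin K ({β} : Set Ω))
  rw [hcard] at hx
  have := congrArg Subtype.val hx
  simpa using this

private lemma aux_all_fixed {β : Ω} {k : ℕ} (hβfix : β ^ (Fintype.card K) ^ k = β)
    {x : Ω} (hx : x ∈ adjoin K ({β} : Set Ω)) : x ^ (Fintype.card K) ^ k = x := by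
  have hβ : IsIntegral K β := aux_isIntegral β
  have hx' : x ∈ Algebra.adjoin K ({β} : Set Ω) := by
    rw [← adjoin_simple_toSubalgebra_of_isAlgebraic hβ.isAlgebraic]; exact hx
  clear hx
  induction hx' using Algebra.adjoin_induction with
  | mem y hy => rw [Set.mem_singleton_iff] at hy; rw [hy]; exact hβfix
  | algebraMap r => rw [← map_pow]; exact congrArg _ (FiniteField.pow_card_pow _ _)
  | add y z _ _ ihy ihz => rw [aux_add_pow, ihy, ihz]
  | mul y z _ _ ihy ihz => rw [mul_pow, ihy, ihz]

private lemma aux_le {β : Ω} {k : ℕ} (hk : k ≠ 0)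
    (hfix : β ^ (Fintype.card K) ^ k = β) :
    Module.finrank K (adjoin K ({β} : Set Ω)) ≤ k := by
  classical
  have hβ : IsIntegral K β := aux_isIntegral β
  haveI : FiniteDimensional K (adjoin K ({β} : Set Ω)) := adjoin.finiteDimensional hβ
  haveI : Finite (adjoin K ({β} : Set Ω)) := Module.finite_of_finite K
  letI : Fintype (adjoin K ({β} : Set Ω)) := Fintype.ofFinite _
  have hq1 : 1 < Fintype.card K := Fintype.one_lt_card
  set P : Polynomial Ω := X ^ (Fintype.card K) ^ k - X with hP
  have hP0 : P ≠ 0 := FiniteField.X_pow_card_pow_sub_X_ne_zero Ω hk hq1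
  have hPdeg : P.natDegree = (Fintype.card K) ^ k :=
    FiniteField.X_pow_card_pow_sub_X_natDegree_eq Ω hk hq1
  have hsub : ∀ x : adjoin K ({β} : Set Ω), (x : Ω) ∈ P.roots.toFinset := by
    intro x
    rw [Multiset.mem_toFinset, mem_roots hP0]
    have := aux_all_fixed hfix x.2
    simp [hP, IsRoot, sub_eq_zero, this]
  have hinj : Fintype.card (adjoin K ({β} : Set Ω)) ≤ P.roots.toFinset.card := by
    have := Fintype.card_le_of_injective
      (fun x : adjoin K ({β} : Set Ω) => (⟨(x : Ω), hsub x⟩ : P.roots.toFinset))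
      (fun a b hab => Subtype.ext (Subtype.mk_eq_mk.mp hab))
    simpa using this
  have hcard : Fintype.card (adjoin K ({β} : Set Ω))
      = Fintype.card K ^ Module.finrank K (adjoin K ({β} : Set Ω)) := Module.card_eq_pow_finrank
  have hroots : P.roots.toFinset.card ≤ (Fintype.card K) ^ k := by
    calc P.roots.toFinset.card ≤ Multiset.card P.roots := P.roots.toFinset_card_le
    _ ≤ P.natDegree := P.card_roots'
    _ = _ := hPdeg
  have : Fintype.card K ^ Module.finrank K (adjoin K ({β} : Set Ω))
      ≤ (Fintype.card K) ^ k := hcard ▸ le_trans hinj hroots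
  exact (Nat.pow_le_pow_iff_right hq1).mp this

private lemma aux_pow_mul {β : Ω} {e : ℕ} (h : β ^ (Fintype.card K) ^ e = β) (m : ℕ) :
    β ^ (Fintype.card K) ^ (e * m) = β := by
  induction m with
  | zero => simp
  | succ m ih => rw [Nat.mul_succ, pow_add, pow_mul, ih, h]

private lemma aux_dvd_of_fix {β : Ω} {k : ℕ} (hfix : β ^ (Fintype.card K) ^ k = β) :
    Module.finrank K (adjoin K ({β} : Set Ω)) ∣ k := by
  have hβ : IsIntegral K β := aux_isIntegral β
  haveI : FiniteDimensional K (adjoin K ({β} : Set Ω)) := adjoin.finiteDimensional hβ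
  set d := Module.finrank K (adjoin K ({β} : Set Ω)) with hd
  have hdfix : β ^ (Fintype.card K) ^ d = β := aux_pow_fix β
  have hdpos : 0 < d := Module.finrank_pos
  rcases eq_or_ne (k % d) 0 with h0 | h0
  · exact Nat.dvd_of_mod_eq_zero h0
  · exfalso
    have hγ : β ^ (Fintype.card K) ^ (k % d) = β := by
      have h1 : (β ^ (Fintype.card K) ^ (k % d)) ^ (Fintype.card K) ^ (d * (k / d)) = β := by
        rw [← pow_mul, ← pow_add]
        rw [Nat.mod_add_div k d, hfix]
      have h2 : (β ^ (Fintype.card K) ^ (k % d)) ^ (Fintype.card K) ^ (d * (k / d))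
          = β ^ (Fintype.card K) ^ (k % d) :=
        aux_all_fixed (aux_pow_mul hdfix (k / d)) (pow_mem (mem_adjoin_simple_self K β) _)
      rw [h2] at h1; exact h1
    have hle' := aux_le h0 hγ
    rw [← hd] at hle'
    exact absurd hle' (not_le.mpr (Nat.mod_lt k hdpos))

end Aux

theorem sum_generates_compositum
    (K Ω : Type*) [Field K] [Fintype K] [Field Ω] [Algebra K Ω] [IsAlgClosure K Ω]
    (q : ℕ) (hq : Fintype.card K = q)
    (α₁ α₂ : Ω) (d₁ d₂ : ℕ)
    (h₁ : Module.finrank K (IntermediateField.adjoin K ({α₁} : Set Ω)) = d₁)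
    (h₂ : Module.finrank K (IntermediateField.adjoin K ({α₂} : Set Ω)) = d₂)
    (hcop : Nat.Coprime d₁ d₂) :
    IntermediateField.adjoin K ({α₁ + α₂} : Set Ω)
        = IntermediateField.adjoin K ({α₁} : Set Ω) ⊔ IntermediateField.adjoin K ({α₂} : Set Ω)
      ∧ Module.finrank K (IntermediateField.adjoin K ({α₁ + α₂} : Set Ω)) = d₁ * d₂ := by
  subst hq
  set q := Fintype.card K with hq
  haveI F1 : FiniteDimensional K (adjoin K ({α₁} : Set Ω)) :=
    adjoin.finiteDimensional (aux_isIntegral α₁)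
  haveI F2 : FiniteDimensional K (adjoin K ({α₂} : Set Ω)) :=
    adjoin.finiteDimensional (aux_isIntegral α₂)
  haveI F12 : FiniteDimensional K (adjoin K ({α₁ + α₂} : Set Ω)) :=
    adjoin.finiteDimensional (aux_isIntegral (α₁ + α₂))
  haveI Fsup : FiniteDimensional K
      ↥(adjoin K ({α₁} : Set Ω) ⊔ adjoin K ({α₂} : Set Ω)) :=
    finiteDimensional_sup _ _
  set d := Module.finrank K (adjoin K ({α₁ + α₂} : Set Ω)) with hd
  have hfixsum : (α₁ + α₂) ^ q ^ d = α₁ + α₂ := aux_pow_fix _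
  have hfix1 : α₁ ^ q ^ d₁ = α₁ := h₁ ▸ aux_pow_fix α₁
  have hfix2 : α₂ ^ q ^ d₂ = α₂ := h₂ ▸ aux_pow_fix α₂
  set c := α₁ ^ q ^ d - α₁ with hc
  have hsum' : α₁ ^ q ^ d + α₂ ^ q ^ d = α₁ + α₂ := by
    rw [← aux_add_pow]; exact hfixsum
  have hc2' : α₂ ^ q ^ d - α₂ = -c := by rw [hc]; linear_combination hsum'
  have hcE1 : c ∈ adjoin K ({α₁} : Set Ω) :=
    sub_mem (pow_mem (mem_adjoin_simple_self K α₁) _) (mem_adjoin_simple_self K α₁)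
  have hcE2 : c ∈ adjoin K ({α₂} : Set Ω) := by
    have hrw : c = -(α₂ ^ q ^ d - α₂) := by rw [hc2']; ring
    rw [hrw]
    exact neg_mem (sub_mem (pow_mem (mem_adjoin_simple_self K α₂) _)
      (mem_adjoin_simple_self K α₂))
  have hinf : adjoin K ({α₁} : Set Ω) ⊓ adjoin K ({α₂} : Set Ω) = ⊥ := by
    rw [← IntermediateField.finrank_eq_one_iff]
    have hA := aux_finrank_dvd
      (inf_le_left : adjoin K ({α₁} : Set Ω) ⊓ adjoin K ({α₂} : Set Ω) ≤ _)
    have hB := aux_finrank_dvd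
      (inf_le_right : adjoin K ({α₁} : Set Ω) ⊓ adjoin K ({α₂} : Set Ω) ≤ _)
    rw [h₁] at hA
    rw [h₂] at hB
    have := Nat.dvd_gcd hA hB
    rwa [Nat.Coprime.gcd_eq_one hcop, Nat.dvd_one] at this
  have hcbot : c ∈ (⊥ : IntermediateField K Ω) := by
    rw [← hinf]; exact IntermediateField.mem_inf.mpr ⟨hcE1, hcE2⟩
  obtain ⟨k₀, hk₀⟩ := IntermediateField.mem_bot.mp hcbot
  have hcfix : ∀ m : ℕ, c ^ q ^ m = c := fun m => by
    rw [← hk₀, ← map_pow, FiniteField.pow_card_pow]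
  have hncfix : ∀ m : ℕ, (-c) ^ q ^ m = -c := fun m => by
    have : -c = algebraMap K Ω (-k₀) := by rw [map_neg, hk₀]
    rw [this, ← map_pow, FiniteField.pow_card_pow]
  have hnatfix : ∀ (m j : ℕ), ((m : Ω)) ^ q ^ j = m := fun m j => by
    rw [← map_natCast (algebraMap K Ω), ← map_pow, FiniteField.pow_card_pow]
  have key : ∀ (β c' : Ω), (∀ j, c' ^ q ^ j = c') → β ^ q ^ d = β + c' →
      ∀ m : ℕ, β ^ q ^ (d * m) = β + m * c' := by
    intro β c' hc' hβ m
    induction m with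
    | zero => simp
    | succ m ih =>
      have hstep : β ^ q ^ (d * (m + 1)) = (β ^ q ^ (d * m)) ^ q ^ d := by
        rw [← pow_mul, ← pow_add, Nat.mul_succ]
      rw [hstep, ih, aux_add_pow, hβ, mul_pow, hnatfix, hc']
      push_cast; ring
  have h1c : (d₁ : Ω) * c = 0 := by
    have hk := key α₁ c hcfix (by rw [hc]; ring) d₁
    have h' : α₁ ^ q ^ (d * d₁) = α₁ := by rw [mul_comm]; exact aux_pow_mul hfix1 d
    rw [h'] at hk
    linear_combination -hk
  have h2c : (d₂ : Ω) * c = 0 := by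
    have hk := key α₂ (-c) hncfix (by linear_combination hc2') d₂
    have h' : α₂ ^ q ^ (d * d₂) = α₂ := by rw [mul_comm]; exact aux_pow_mul hfix2 d
    rw [h'] at hk
    linear_combination hk
  obtain ⟨u, v, huv⟩ := Nat.isCoprime_iff_coprime.mpr hcop
  have hcast : (u : Ω) * (d₁ : Ω) + (v : Ω) * (d₂ : Ω) = 1 := by
    have := congrArg (fun z : ℤ => (z : Ω)) huv
    push_cast at this
    exact this
  have hc0 : c = 0 := by linear_combination (u : Ω) * h1c + (v : Ω) * h2c - c * hcast
  have hfix1d : α₁ ^ q ^ d = α₁ := by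
    have : α₁ ^ q ^ d - α₁ = 0 := by rw [← hc, hc0]
    linear_combination this
  have hfix2d : α₂ ^ q ^ d = α₂ := by
    have : α₂ ^ q ^ d - α₂ = -c := hc2'
    rw [hc0, neg_zero] at this
    linear_combination this
  have hdvd1 : d₁ ∣ d := h₁ ▸ aux_dvd_of_fix hfix1d
  have hdvd2 : d₂ ∣ d := h₂ ▸ aux_dvd_of_fix hfix2d
  have hdvd12 : d₁ * d₂ ∣ d := hcop.mul_dvd_of_dvd_of_dvd hdvd1 hdvd2
  have hle : adjoin K ({α₁ + α₂} : Set Ω)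
      ≤ adjoin K ({α₁} : Set Ω) ⊔ adjoin K ({α₂} : Set Ω) := by
    rw [adjoin_le_iff]
    intro x hx
    rw [Set.mem_singleton_iff] at hx
    subst hx
    exact add_mem (SetLike.le_def.mp le_sup_left (mem_adjoin_simple_self K α₁))
      (SetLike.le_def.mp le_sup_right (mem_adjoin_simple_self K α₂))
  have hdsup : d ∣ Module.finrank K ↥(adjoin K ({α₁} : Set Ω) ⊔ adjoin K ({α₂} : Set Ω)) :=
    aux_finrank_dvd hle
  have hsuple : Module.finrank K ↥(adjoin K ({α₁} : Set Ω) ⊔ adjoin K ({α₂} : Set Ω))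
      ≤ d₁ * d₂ := by
    rw [← h₁, ← h₂]
    exact IntermediateField.finrank_sup_le _ _
  have hdpos : 0 < d := Module.finrank_pos
  have hsuppos : 0 < Module.finrank K
      ↥(adjoin K ({α₁} : Set Ω) ⊔ adjoin K ({α₂} : Set Ω)) := Module.finrank_pos
  have hd12 : d = d₁ * d₂ :=
    le_antisymm (le_trans (Nat.le_of_dvd hsuppos hdsup) hsuple) (Nat.le_of_dvd hdpos hdvd12)
  have hs12 : Module.finrank K ↥(adjoin K ({α₁} : Set Ω) ⊔ adjoin K ({α₂} : Set Ω))
      = d₁ * d₂ :=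
    le_antisymm hsuple (hd12 ▸ Nat.le_of_dvd hsuppos hdsup)
  exact ⟨eq_of_le_of_finrank_eq hle (hd12.trans hs12.symm), hd12⟩
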